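/- Let E be a directed graph, A a C*-algebra, {S_e, P_v} a Cuntz-Krieger E-family in A, and H ⊆ E⁰ a hereditary subset. Let C*(S, P) denote the C*-subalgebra of A generated by {S_e : e ∈ E¹} ∪ {P_v : v ∈ E⁰}. Then the closed two-sided ideal of C*(S, P) generated by {P_v : v ∈ H} equals the closed two-sided ideal of C*(S, P) generated by {P_v : v ∈ Σ(H)}, where Σ(H) is the saturation of H. -/
import Mathlib


/-- A (countable) directed graph `E = (E⁰, E¹, r, s)`:
a set of vertices, a set of edges, and range and source maps. -/
structure Digraph' where
  V : Type
  E : Type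
  src : E → V
  rng : E → V

namespace Digraph'

variable (G : Digraph')

/-- `v ≥ w`: there is a path (possibly of length zero) from `v` to `w`. -/
def Reach (v w : G.V) : Prop :=
  Relation.ReflTransGen (fun a b : G.V => ∃ e : G.E, G.src e = a ∧ G.rng e = b) v w

/-- A set `H` of vertices is hereditary if `v ∈ H` and `v ≥ w` imply `w ∈ H`. -/
def Hereditary (H : Set G.V) : Prop :=
  ∀ ⦃v w : G.V⦄, v ∈ H → G.Reach v w → w ∈ H

/-- A set `X` of vertices is saturated if every vertex `v` with `0 < |s⁻¹(v)| < ∞`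
all of whose emitted edges have range in `X` itself belongs to `X`. -/
def Saturated (X : Set G.V) : Prop :=
  ∀ v : G.V, (G.src ⁻¹' {v}).Finite → (G.src ⁻¹' {v}).Nonempty →
    (∀ e : G.E, G.src e = v → G.rng e ∈ X) → v ∈ X

/-- The saturation `Σ(X)`: the smallest saturated set containing `X`. -/
def saturation (X : Set G.V) : Set G.V :=
  ⋂₀ {Y : Set G.V | G.Saturated Y ∧ X ⊆ Y}

/-- `ΣH(X)`: the smallest saturated hereditary set containing `X`. -/
def satHered (X : Set G.V) : Set G.V :=
  ⋂₀ {Y : Set G.V | G.Saturated Y ∧ G.Hereditary Y ∧ X ⊆ Y}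

end Digraph'

namespace Digraph'

/-- A Cuntz-Krieger `E`-family in a C*-algebra `A`: mutually orthogonal projections
`P v`, elements `S e` with mutually orthogonal range projections, satisfying the
Cuntz-Krieger relations (G1)–(G3). -/
structure IsCKFamily (G : Digraph') {A : Type*} [NonUnitalCStarAlgebra A]
    [PartialOrder A] [StarOrderedRing A] (P : G.V → A) (S : G.E → A) : Prop where
  proj_star : ∀ v : G.V, star (P v) = P v
  proj_idem : ∀ v : G.V, P v * P v = P v
  proj_orth : ∀ v w : G.V, v ≠ w → P v * P w = 0
  range_orth : ∀ e f : G.E, e ≠ f → (S e * star (S e)) * (S f * star (S f)) = 0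
  ck1 : ∀ e : G.E, star (S e) * S e = P (G.rng e)
  ck2 : ∀ e : G.E, S e * star (S e) ≤ P (G.src e)
  ck3 : ∀ v : G.V, (G.src ⁻¹' {v}).Finite → (G.src ⁻¹' {v}).Nonempty →
    P v = ∑ᶠ e ∈ G.src ⁻¹' {v}, S e * star (S e)

end Digraph'

/-- `J` is a closed two-sided ideal of the subalgebra (given as the subset `B`)
of the ambient C*-algebra. -/
def IsClosedIdealOf {A : Type*} [NonUnitalCStarAlgebra A] (B J : Set A) : Prop :=
  J ⊆ B ∧ IsClosed J ∧ (0 : A) ∈ J ∧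
  (∀ a b : A, a ∈ J → b ∈ J → a + b ∈ J) ∧
  (∀ (c : ℂ) (a : A), a ∈ J → c • a ∈ J) ∧
  (∀ b a : A, b ∈ B → a ∈ J → b * a ∈ J ∧ a * b ∈ J)

/-- The closed two-sided ideal of the subalgebra `B` generated by a subset `X`. -/
def closedIdealGenIn {A : Type*} [NonUnitalCStarAlgebra A] (B X : Set A) : Set A :=
  ⋂₀ {J : Set A | IsClosedIdealOf B J ∧ X ⊆ J}

/-- The C*-subalgebra `C*(S, P)` of `A` generated by a Cuntz-Krieger family,
regarded as a subset of `A`: the closure of the non-unital star subalgebra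
generated by the `S e` and the `P v`. -/
def cstarSP {A : Type*} [NonUnitalCStarAlgebra A] (G : Digraph')
    (P : G.V → A) (S : G.E → A) : Set A :=
  closure ((NonUnitalStarAlgebra.adjoin ℂ (Set.range S ∪ Set.range P) :
    NonUnitalStarSubalgebra ℂ A) : Set A)

section Aux

variable {A : Type*} [NonUnitalCStarAlgebra A]

lemma cstar_mem_setlike (G : Digraph') (P : G.V → A) (S : G.E → A) :
    ((NonUnitalStarAlgebra.adjoin ℂ (Set.range S ∪ Set.range P) :
      NonUnitalStarSubalgebra ℂ A).topologicalClosure : Set A) = cstarSP G P S := rfl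

lemma isClosedIdealOf_self (G : Digraph') (P : G.V → A) (S : G.E → A) :
    IsClosedIdealOf (cstarSP G P S) (cstarSP G P S) := by
  rw [← cstar_mem_setlike]
  refine ⟨subset_rfl, NonUnitalStarSubalgebra.isClosed_topologicalClosure _, zero_mem _,
    fun a b ha hb => add_mem ha hb, fun c a ha => SMulMemClass.smul_mem c ha,
    fun b a hb ha => ⟨mul_mem hb ha, mul_mem ha hb⟩⟩

lemma S_mem (G : Digraph') (P : G.V → A) (S : G.E → A) (e : G.E) :
    S e ∈ cstarSP G P S :=
  subset_closure (NonUnitalStarAlgebra.subset_adjoin ℂ _ (Or.inl ⟨e, rfl⟩))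

lemma starS_mem (G : Digraph') (P : G.V → A) (S : G.E → A) (e : G.E) :
    star (S e) ∈ cstarSP G P S :=
  subset_closure (star_mem (NonUnitalStarAlgebra.subset_adjoin ℂ _ (Or.inl ⟨e, rfl⟩)))

lemma P_mem (G : Digraph') (P : G.V → A) (S : G.E → A) (v : G.V) :
    P v ∈ cstarSP G P S :=
  subset_closure (NonUnitalStarAlgebra.subset_adjoin ℂ _ (Or.inr ⟨v, rfl⟩))

lemma gen_subset {B X : Set A} (hXB : X ⊆ B) : X ⊆ closedIdealGenIn B X :=
  fun x hx J hJ => hJ.2 hx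

lemma closedIdealGenIn_isIdeal (G : Digraph') (P : G.V → A) (S : G.E → A)
    {X : Set A} (hXB : X ⊆ cstarSP G P S) :
    IsClosedIdealOf (cstarSP G P S) (closedIdealGenIn (cstarSP G P S) X) := by
  have hne : IsClosedIdealOf (cstarSP G P S) (cstarSP G P S) ∧ X ⊆ cstarSP G P S :=
    ⟨isClosedIdealOf_self G P S, hXB⟩
  refine ⟨fun x hx => hx _ hne, ?_, fun J hJ => hJ.1.2.2.1,
    fun a b ha hb J hJ => hJ.1.2.2.2.1 a b (ha J hJ) (hb J hJ),
    fun c a ha J hJ => hJ.1.2.2.2.2.1 c a (ha J hJ),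
    fun b a hb ha => ⟨fun J hJ => (hJ.1.2.2.2.2.2 b a hb (ha J hJ)).1,
      fun J hJ => (hJ.1.2.2.2.2.2 b a hb (ha J hJ)).2⟩⟩
  · exact isClosed_sInter (fun J hJ => hJ.1.2.1)

lemma closedIdealGenIn_mono {B X Y : Set A} (h : X ⊆ Y) :
    closedIdealGenIn B X ⊆ closedIdealGenIn B Y :=
  Set.sInter_subset_sInter (fun J hJ => ⟨hJ.1, h.trans hJ.2⟩)

lemma closedIdealGenIn_le {B X J : Set A} (hJ : IsClosedIdealOf B J) (hX : X ⊆ J) :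
    closedIdealGenIn B X ⊆ J :=
  Set.sInter_subset_of_mem ⟨hJ, hX⟩

lemma S_mul_P {G : Digraph'} [PartialOrder A] [StarOrderedRing A]
    {P : G.V → A} {S : G.E → A} (hCK : G.IsCKFamily P S) (e : G.E) :
    S e * P (G.rng e) = S e := by
  have key : star (S e * P (G.rng e) - S e) * (S e * P (G.rng e) - S e) = 0 := by
    have expand : star (S e * P (G.rng e) - S e) * (S e * P (G.rng e) - S e)
        = P (G.rng e) * (star (S e) * S e) * P (G.rng e)
          - P (G.rng e) * (star (S e) * S e)
          - (star (S e) * S e) * P (G.rng e) + star (S e) * S e := by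
      simp only [star_sub, star_mul, hCK.proj_star]
      noncomm_ring
    rw [expand]
    simp only [hCK.ck1, hCK.proj_idem]
    abel
  exact sub_eq_zero.mp ((CStarRing.star_mul_self_eq_zero_iff _).mp key)

end Aux

/-- For a hereditary set `H`, the closed two-sided ideal of `C*(S, P)`
generated by `{P v : v ∈ H}` equals the one generated by `{P v : v ∈ Σ(H)}`. -/
theorem stmt_13 (G : Digraph') [Countable G.V] [Countable G.E]
    {A : Type*} [NonUnitalCStarAlgebra A] [PartialOrder A] [StarOrderedRing A]
    (P : G.V → A) (S : G.E → A) (hCK : G.IsCKFamily P S)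
    (H : Set G.V) (hH : G.Hereditary H) :
    closedIdealGenIn (cstarSP G P S) {x : A | ∃ v ∈ H, x = P v} =
      closedIdealGenIn (cstarSP G P S) {x : A | ∃ v ∈ G.saturation H, x = P v} := by
  have hXB : {x : A | ∃ v ∈ H, x = P v} ⊆ cstarSP G P S := by
    rintro x ⟨v, -, rfl⟩; exact P_mem G P S v
  set I := closedIdealGenIn (cstarSP G P S) {x : A | ∃ v ∈ H, x = P v} with hI
  have hIideal := closedIdealGenIn_isIdeal G P S hXB
  apply subset_antisymm
  · apply closedIdealGenIn_mono
    rintro x ⟨v, hv, rfl⟩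
    exact ⟨v, fun Y hY => hY.2 hv, rfl⟩
  · apply closedIdealGenIn_le hIideal
    rintro x ⟨v, hv, rfl⟩
    have hsat : G.Saturated {v : G.V | P v ∈ I} := by
      intro v hfin hne hall
      have h3 := hCK.ck3 v hfin hne
      rw [← hfin.coe_toFinset, finsum_mem_coe_finset] at h3
      rw [Set.mem_setOf_eq, h3]
      apply Finset.sum_induction _ (· ∈ I) hIideal.2.2.2.1 hIideal.2.2.1
      intro e he
      rw [Set.Finite.mem_toFinset] at he
      have heq : S e * star (S e) = S e * (P (G.rng e) * star (S e)) := by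
        rw [← mul_assoc, S_mul_P hCK e]
      rw [heq]
      have hPr : P (G.rng e) ∈ I := hall e he
      have h1 : P (G.rng e) * star (S e) ∈ I :=
        (hIideal.2.2.2.2.2 (star (S e)) _ (starS_mem G P S e) hPr).2
      exact (hIideal.2.2.2.2.2 (S e) _ (S_mem G P S e) h1).1
    have hHY : H ⊆ {v : G.V | P v ∈ I} := fun w hw =>
      gen_subset hXB ⟨w, hw, rfl⟩
    exact hv _ ⟨hsat, hHY⟩
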